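/- Let k be a finite field, A a finite-dimensional k-algebra, and V a finite-dimensional A-module such that End_A(V) is a field with d elements. Then for every positive integer t, the number of A-submodules B of V^{⊕t} such that B ≅ V^{⊕(t-1)} and V^{⊕t}/B ≅ V equals (d^{t} - 1)/(d - 1) = 1 + d + d² + ··· + d^{t-1}. -/

import Mathlib

section aux
variable {A : Type} [Ring A] {V : Type} [AddCommGroup V] [Module A V]


lemma aux_apply {t : ℕ} (φ : (Fin t → V) →ₗ[A] V) (v : Fin t → V) :
    φ v = ∑ j, (φ ∘ₗ LinearMap.single A (fun _ : Fin t => V) j) (v j) := by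
  conv_lhs => rw [← Finset.univ_sum_single v]
  rw [map_sum]
  simp [LinearMap.single]
  rfl

lemma aux_comp_ne {t : ℕ} (φ : (Fin t → V) →ₗ[A] V) (hφ : φ ≠ 0) :
    ∃ i, φ ∘ₗ LinearMap.single A (fun _ : Fin t => V) i ≠ 0 := by
  by_contra h
  push_neg at h
  apply hφ
  ext v x
  simp [h]

lemma aux_surj (hfield : IsField (Module.End A V)) {t : ℕ}
    (φ : (Fin t → V) →ₗ[A] V) (hφ : φ ≠ 0) : Function.Surjective φ := by
  obtain ⟨i, hi⟩ := aux_comp_ne φ hφ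
  obtain ⟨b, hb⟩ := hfield.mul_inv_cancel hi
  intro w
  refine ⟨Pi.single i (b w), ?_⟩
  have : φ (Pi.single i (b w)) = (φ ∘ₗ LinearMap.single A (fun _ : Fin t => V) i) (b w) := by
    simp [LinearMap.single]
    rfl
  rw [this]
  have := congrArg (fun f : Module.End A V => f w) hb
  simpa [Module.End.mul_apply] using this


lemma aux_apply' {t : ℕ} (φ : (Fin t → V) →ₗ[A] V) (v : Fin t → V) :
    φ v = ∑ j, (φ ∘ₗ LinearMap.single A (fun _ : Fin t => V) j) (v j) := by
  conv_lhs => rw [← Finset.univ_sum_single v]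
  rw [map_sum]
  simp [LinearMap.single]
  rfl

lemma aux_ker_equiv (hfield : IsField (Module.End A V)) {n : ℕ}
    (φ : (Fin (n+1) → V) →ₗ[A] V) (hφ : φ ≠ 0) :
    Nonempty (LinearMap.ker φ ≃ₗ[A] (Fin n → V)) := by
  classical
  obtain ⟨i, hi⟩ : ∃ i, φ ∘ₗ LinearMap.single A (fun _ : Fin (n+1) => V) i ≠ 0 := by
    by_contra h
    push_neg at h
    apply hφ
    ext v x
    simp [h]
  set c : Fin (n+1) → Module.End A V := fun j => φ ∘ₗ LinearMap.single A (fun _ : Fin (n+1) => V) j with hc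
  obtain ⟨b, hb⟩ := hfield.mul_inv_cancel hi
  have hbc : (b * c i : Module.End A V) = 1 := by rw [hfield.mul_comm]; exact hb
  have hcb : (c i * b : Module.End A V) = 1 := hb
  have hsplit : ∀ f : Fin (n+1) → V, ∑ j, f j = f i + ∑ j : {x : Fin (n+1) // x ≠ i}, f j.1 := by
    intro f
    rw [← Finset.add_sum_erase _ f (Finset.mem_univ i)]
    congr 1
    exact Finset.sum_subtype (Finset.univ.erase i) (fun x => by simp) f
  have hsum : ∀ v : Fin (n+1) → V,
      φ v = c i (v i) + ∑ j : {x : Fin (n+1) // x ≠ i}, c j.1 (v j.1) := by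
    intro v
    rw [aux_apply' φ v]
    exact hsplit _
  set r : ↥(LinearMap.ker φ) →ₗ[A] ({x : Fin (n+1) // x ≠ i} → V) :=
    (LinearMap.funLeft A V Subtype.val).comp (LinearMap.ker φ).subtype with hr
  have hinj : Function.Injective r := by
    rw [← LinearMap.ker_eq_bot, Submodule.eq_bot_iff]
    rintro ⟨v, hv⟩ hrv
    have hco : ∀ j : Fin (n+1), j ≠ i → v j = 0 := fun j hj =>
      congrFun (show r ⟨v, hv⟩ = 0 from hrv) ⟨j, hj⟩
    have h0 : φ v = 0 := hv
    rw [hsum] at h0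
    have hci : c i (v i) = 0 := by
      rw [Finset.sum_eq_zero (fun j _ => by rw [hco j.1 j.2, map_zero])] at h0
      simpa using h0
    have hvi : v i = 0 := by
      have h2 := congrArg (fun f : Module.End A V => f (v i)) hbc
      simp only [Module.End.mul_apply, Module.End.one_apply] at h2
      rw [← h2, hci, map_zero]
    have : v = 0 := by
      funext j
      by_cases hj : j = i
      · rw [hj]; exact hvi
      · exact hco j hj
    exact Subtype.ext this
  have hsurjr : Function.Surjective r := by
    intro w
    set S : V := ∑ j : {x : Fin (n+1) // x ≠ i}, c j.1 (w j) with hS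
    set v : Fin (n+1) → V := fun j => if h : j = i then b (-S) else w ⟨j, h⟩ with hvdef
    have hvmem : v ∈ LinearMap.ker φ := by
      have hvi : v i = b (-S) := by simp [hvdef]
      have hvj : ∀ j : {x : Fin (n+1) // x ≠ i}, v j.1 = w j := by
        rintro ⟨j, hj⟩; simp [hvdef, hj]
      have : φ v = c i (b (-S)) + S := by
        rw [hsum v, hvi]
        congr 1
        rw [hS]
        exact Finset.sum_congr rfl (fun j _ => by rw [hvj j])
      have hcib : c i (b (-S)) = -S := by
        have h2 := congrArg (fun f : Module.End A V => f (-S)) hcb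
        simpa [Module.End.mul_apply] using h2
      simp only [LinearMap.mem_ker, this, hcib, neg_add_cancel]
    refine ⟨⟨v, hvmem⟩, ?_⟩
    funext j
    show v j.1 = w j
    rcases j with ⟨j, hj⟩
    simp [hvdef, hj]
  exact ⟨(LinearEquiv.ofBijective r ⟨hinj, hsurjr⟩).trans
    (LinearEquiv.funCongrLeft A V (finSuccAboveEquiv i))⟩

lemma aux_quot_equiv {M : Type} [AddCommGroup M] [Module A M]
    (φ : M →ₗ[A] V) (hφ : Function.Surjective φ) :
    Nonempty ((M ⧸ LinearMap.ker φ) ≃ₗ[A] V) := by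
  refine ⟨LinearEquiv.ofBijective ((LinearMap.ker φ).liftQ φ le_rfl) ⟨?_, ?_⟩⟩
  · rw [← LinearMap.ker_eq_bot]
    exact Submodule.ker_liftQ_eq_bot _ _ _ le_rfl
  · intro w
    obtain ⟨x, hx⟩ := hφ w
    exact ⟨Submodule.Quotient.mk x, by rwa [Submodule.liftQ_apply]⟩

lemma aux_fact {M : Type} [AddCommGroup M] [Module A M]
    (φ ψ : M →ₗ[A] V) (hφ : Function.Surjective φ) (hψ : Function.Surjective ψ)
    (h : LinearMap.ker φ = LinearMap.ker ψ) :
    ∃ e : V ≃ₗ[A] V, ψ = e.toLinearMap ∘ₗ φ := by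
  have hφb : Function.Bijective ((LinearMap.ker φ).liftQ φ le_rfl) := by
    constructor
    · rw [← LinearMap.ker_eq_bot]; exact Submodule.ker_liftQ_eq_bot _ _ _ le_rfl
    · intro w; obtain ⟨x, hx⟩ := hφ w
      exact ⟨Submodule.Quotient.mk x, by rwa [Submodule.liftQ_apply]⟩
  have hψb : Function.Bijective ((LinearMap.ker φ).liftQ ψ h.le) := by
    constructor
    · rw [← LinearMap.ker_eq_bot]; exact Submodule.ker_liftQ_eq_bot _ _ _ h.ge
    · intro w; obtain ⟨x, hx⟩ := hψ w
      exact ⟨Submodule.Quotient.mk x, by rwa [Submodule.liftQ_apply]⟩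
  set eφ := LinearEquiv.ofBijective _ hφb
  set eψ := LinearEquiv.ofBijective _ hψb
  refine ⟨eφ.symm.trans eψ, ?_⟩
  ext x
  have h1 : eφ (Submodule.Quotient.mk x) = φ x := Submodule.liftQ_apply _ φ (h := le_rfl) x
  have h2 : eψ (Submodule.Quotient.mk x) = ψ x := Submodule.liftQ_apply _ ψ (h := h.le) x
  show ψ x = eψ (eφ.symm (φ x))
  rw [← h1, LinearEquiv.symm_apply_apply, h2]

end aux

lemma aux_geo (d : ℕ) (hd : 2 ≤ d) (m : ℕ) :
    (∑ i ∈ Finset.range m, d ^ i) * (d - 1) = d ^ m - 1 := by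
  induction m with
  | zero => simp
  | succ m ih =>
    rw [Finset.sum_range_succ, add_mul, ih, pow_succ]
    have h1 : 1 ≤ d ^ m := Nat.one_le_pow _ _ (by omega)
    have hb : d ^ m * d = d ^ m * (d - 1) + d ^ m := by
      have h2 : d - 1 + 1 = d := by omega
      calc d ^ m * d = d ^ m * ((d - 1) + 1) := by rw [h2]
        _ = d ^ m * (d - 1) + d ^ m := by ring
    rw [hb]
    omega

/-- Let `k` be a finite field, `A` a finite-dimensional `k`-algebra, and `V`
a finite-dimensional `A`-module such that `End_A(V)` is a field with `d` elements. Then for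
every positive integer `t`, the number of `A`-submodules `B` of `V^{⊕t}` with
`B ≅ V^{⊕(t-1)}` and `V^{⊕t}/B ≅ V` equals `(d^t - 1)/(d - 1) = 1 + d + ⋯ + d^{t-1}`. -/
theorem stmt9 (k : Type) [Field k] [Fintype k]
    (A : Type) [Ring A] [Algebra k A] [FiniteDimensional k A]
    (V : Type) [AddCommGroup V] [Module k V] [Module A V]
    [IsScalarTower k A V] [SMulCommClass k A V] [FiniteDimensional k V]
    (hfield : IsField (Module.End A V))
    (d : ℕ) (hd : Nat.card (Module.End A V) = d)
    (t : ℕ) (ht : 0 < t) :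
    Nat.card {B : Submodule A (Fin t → V) //
        Nonempty (B ≃ₗ[A] (Fin (t - 1) → V)) ∧
          Nonempty (((Fin t → V) ⧸ B) ≃ₗ[A] V)} =
      (d ^ t - 1) / (d - 1) ∧
    (d ^ t - 1) / (d - 1) = ∑ i ∈ Finset.range t, d ^ i := by
  classical
  obtain ⟨n, rfl⟩ : ∃ n, t = n + 1 := ⟨t - 1, (Nat.succ_pred_eq_of_pos ht).symm⟩
  letI : Field (Module.End A V) := hfield.toField
  have hVfin : Finite V := Module.finite_of_finite k
  have hDfin : Finite (Module.End A V) :=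
    Finite.of_injective (fun f => (f : V → V)) DFunLike.coe_injective
  letI : Fintype (Module.End A V) := Fintype.ofFinite _
  have hVnt : Nontrivial V := by
    by_contra h
    rw [not_nontrivial_iff_subsingleton] at h
    have hsub : Subsingleton (Module.End A V) :=
      ⟨fun f g => by ext v; exact Subsingleton.elim _ _⟩
    exact not_subsingleton _ hsub
  have hDcard : Fintype.card (Module.End A V) = d := by
    rw [← Nat.card_eq_fintype_card]; exact hd
  have hd2 : 2 ≤ d := by
    rw [← hDcard]
    exact Fintype.one_lt_card
  set H := ((Fin (n+1) → V) →ₗ[A] V) with hH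
  have hHfin : Finite H :=
    Finite.of_injective (fun f => (f : (Fin (n+1) → V) → V)) DFunLike.coe_injective
  letI : Fintype H := Fintype.ofFinite _
  have hcardH : Nat.card H = d ^ (n+1) := by
    rw [← Nat.card_congr (LinearMap.lsum A (fun _ : Fin (n+1) => V) ℕ).toEquiv]
    rw [Nat.card_fun]
    have hDc : Nat.card (V →ₗ[A] V) = d := hd
    rw [hDc]
    simp [Nat.card_eq_fintype_card]
  have hcardN : Nat.card {φ : H // φ ≠ 0} = d ^ (n+1) - 1 := by
    rw [Nat.card_eq_fintype_card]
    have h1 : Fintype.card {φ : H // ¬ (φ = 0)} =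
        Fintype.card H - Fintype.card {φ : H // φ = 0} := Fintype.card_subtype_compl _
    have h2 : Fintype.card {φ : H // φ = 0} = 1 := Fintype.card_subtype_eq 0
    have h3 : Fintype.card H = d ^ (n+1) := by rw [← Nat.card_eq_fintype_card]; exact hcardH
    calc Fintype.card {φ : H // φ ≠ 0} = Fintype.card H - Fintype.card {φ : H // φ = 0} := h1
      _ = d ^ (n+1) - 1 := by rw [h2, h3]
  set S' := {B : Submodule A (Fin (n+1) → V) //
      Nonempty (B ≃ₗ[A] (Fin (n + 1 - 1) → V)) ∧
        Nonempty (((Fin (n+1) → V) ⧸ B) ≃ₗ[A] V)} with hS'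
  -- choose representatives
  have hrep : ∀ B : S', ∃ φ : H, LinearMap.ker φ = (B : Submodule A (Fin (n+1) → V)) ∧
      Function.Surjective φ := by
    rintro ⟨B, -, ⟨e⟩⟩
    refine ⟨e.toLinearMap ∘ₗ B.mkQ, ?_, ?_⟩
    · rw [LinearMap.ker_comp, LinearEquiv.ker, Submodule.comap_bot, Submodule.ker_mkQ]
    · rw [LinearMap.coe_comp]
      exact e.surjective.comp (Submodule.mkQ_surjective B)
  choose rep hker hsurj using hrep
  have hrepne : ∀ B : S', rep B ≠ 0 := by
    intro B h
    obtain ⟨v, hv⟩ := exists_ne (0 : V)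
    obtain ⟨x, hx⟩ := hsurj B v
    rw [h] at hx
    exact hv (hx.symm.trans (LinearMap.zero_apply x))
  have hunit_inj : ∀ u : (Module.End A V)ˣ, Function.Injective (u : Module.End A V) := by
    intro u a b hab
    have h1 := congrArg (fun f : Module.End A V => f a) u.inv_mul
    have h2 := congrArg (fun f : Module.End A V => f b) u.inv_mul
    simp only [Module.End.mul_apply, Module.End.one_apply] at h1 h2
    rw [← h1, ← h2, hab]
  have hGne : ∀ (B : S') (u : (Module.End A V)ˣ),
      (u : Module.End A V) ∘ₗ rep B ≠ 0 := by
    intro B u h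
    apply hrepne B
    refine LinearMap.ext fun x => ?_
    have hx : (u : Module.End A V) (rep B x) = (u : Module.End A V) 0 := by
      rw [map_zero]
      exact congrFun (congrArg DFunLike.coe h) x
    simpa using hunit_inj u hx
  set G : S' × (Module.End A V)ˣ → {φ : H // φ ≠ 0} :=
    fun p => ⟨(p.2 : Module.End A V) ∘ₗ rep p.1, hGne p.1 p.2⟩ with hG
  have hGker : ∀ (B : S') (u : (Module.End A V)ˣ),
      LinearMap.ker ((u : Module.End A V) ∘ₗ rep B) = (B : Submodule A (Fin (n+1) → V)) := by
    intro B u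
    rw [LinearMap.ker_comp, (LinearMap.ker_eq_bot).2 (hunit_inj u), Submodule.comap_bot,
      hker B]
  have hGinj : Function.Injective G := by
    rintro ⟨B, u⟩ ⟨B', u'⟩ hGG
    have h1 : (u : Module.End A V) ∘ₗ rep B = (u' : Module.End A V) ∘ₗ rep B' :=
      congrArg Subtype.val hGG
    have hBB : B = B' := by
      apply Subtype.ext
      rw [← hGker B u, ← hGker B' u', h1]
    subst hBB
    have huu : u = u' := by
      apply Units.ext
      ext v
      obtain ⟨x, hx⟩ := hsurj B v
      have := congrFun (congrArg DFunLike.coe h1) x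
      simp only [LinearMap.comp_apply] at this
      rw [← hx]
      exact this
    rw [huu]
  have hGsurj : Function.Surjective G := by
    rintro ⟨ψ, hψ⟩
    have hs : Function.Surjective ψ := aux_surj hfield ψ hψ
    have hke : Nonempty ((LinearMap.ker ψ) ≃ₗ[A] (Fin (n + 1 - 1) → V)) :=
      aux_ker_equiv hfield ψ hψ
    have hq := aux_quot_equiv ψ hs
    set B : S' := ⟨LinearMap.ker ψ, hke, hq⟩ with hB
    obtain ⟨e, he⟩ := aux_fact (rep B) ψ (hsurj B) hs (by rw [hker B])
    have hmul1 : e.toLinearMap * e.symm.toLinearMap = (1 : Module.End A V) := by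
      ext v; simp [Module.End.mul_apply]
    have hmul2 : e.symm.toLinearMap * e.toLinearMap = (1 : Module.End A V) := by
      ext v; simp [Module.End.mul_apply]
    refine ⟨⟨B, ⟨e.toLinearMap, e.symm.toLinearMap, hmul1, hmul2⟩⟩, ?_⟩
    apply Subtype.ext
    exact he.symm
  have hcardU : Nat.card (Module.End A V)ˣ = d - 1 := by
    rw [Nat.card_eq_fintype_card, Fintype.card_units, hDcard]
  have hprod : Nat.card {φ : H // φ ≠ 0} = Nat.card S' * (d - 1) := by
    rw [← Nat.card_congr (Equiv.ofBijective G ⟨hGinj, hGsurj⟩),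
      Nat.card_prod, hcardU]
  have key : d ^ (n+1) - 1 = Nat.card S' * (d - 1) := by rw [← hcardN, hprod]
  have hpos : 0 < d - 1 := by omega
  constructor
  · exact (Nat.div_eq_of_eq_mul_left hpos key).symm
  · exact Nat.div_eq_of_eq_mul_left hpos (aux_geo d hd2 (n+1)).symm
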